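/- Let G be a finite simple graph whose vertex set V has even cardinality n, let R be a set of edges of G with |R| = n/2 (the red edges), and let ℓ ∈ ℕ with ℓ ≤ n/2. Let p and p′ be two new candidates and let C = V ∪ {p, p′}. Let the registered multiset X consist of one 2-Approval vote {a, b} for each edge {a, b} ∈ R, together with one vote {p, p′}; let the unregistered multiset Y consist of one 2-Approval vote {a, b} for each edge {a, b} of G not in R. Then G has a perfect matching containing exactly ℓ edges of R if and only if there exist submultisets X′ of X and Y′ of Y with |X′| = |Y′| = n/2 − ℓ such that p is a 2-Approval winner of the multiset (X − X′) + Y′. -/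
import Mathlib
set_option linter.unusedSectionVars false


/-- The 2-Approval score of candidate `c`: the number of votes containing `c`. -/
def apScore {C : Type} [DecidableEq C] (V : Multiset (Sym2 C)) (c : C) : ℕ :=
  Multiset.card (V.filter (fun v => c ∈ v))

/-- `c` is a 2-Approval winner of `V` if its score is at least that of every candidate. -/
def apWinner {C : Type} [Fintype C] [DecidableEq C] (V : Multiset (Sym2 C)) (c : C) : Prop :=
  ∀ d : C, apScore V d ≤ apScore V c

/-- The candidate set `C = V ∪ {p, p′}`, with `p = Sum.inr false` and `p′ = Sum.inr true`. -/
abbrev Cand (V : Type) : Type := V ⊕ Bool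

/-- The registered votes: one vote `{a, b}` per red edge `{a, b} ∈ R`, plus one vote
`{p, p′}`. -/
def Xreg {V : Type} [DecidableEq V] (R : Finset (Sym2 V)) : Multiset (Sym2 (Cand V)) :=
  R.val.map (Sym2.map Sum.inl) + {s(Sum.inr false, Sum.inr true)}

/-- The unregistered votes: one vote `{a, b}` per nonred edge `{a, b}` of `G`. -/
def Yunreg {V : Type} [Fintype V] [DecidableEq V] (G : SimpleGraph V) [DecidableRel G.Adj]
    (R : Finset (Sym2 V)) : Multiset (Sym2 (Cand V)) :=
  (G.edgeFinset \ R).val.map (Sym2.map Sum.inl)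



namespace S2A

variable {V : Type} [DecidableEq V]

lemma emb_inj : Function.Injective (Sym2.map (Sum.inl : V → V ⊕ Bool)) :=
  Sym2.map.injective Sum.inl_injective

lemma mem_emb_inl {v : V} {e : Sym2 V} :
    (Sum.inl v : V ⊕ Bool) ∈ Sym2.map Sum.inl e ↔ v ∈ e := by
  simp [Sym2.mem_map]

lemma notMem_emb_inr {b : Bool} {e : Sym2 V} :
    (Sum.inr b : V ⊕ Bool) ∉ Sym2.map Sum.inl e := by
  simp [Sym2.mem_map]

lemma apScore_add (A B : Multiset (Sym2 (V ⊕ Bool))) (c : V ⊕ Bool) :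
    apScore (A + B) c = apScore A c + apScore B c := by
  simp [apScore, Multiset.filter_add]

lemma apScore_map_inr (N : Multiset (Sym2 V)) (b : Bool) :
    apScore (N.map (Sym2.map Sum.inl)) (Sum.inr b) = 0 := by
  simp [apScore, Multiset.filter_map, Function.comp, notMem_emb_inr, Multiset.filter_eq_nil]

lemma apScore_map_inl (N : Multiset (Sym2 V)) (v : V) :
    apScore (N.map (Sym2.map Sum.inl)) (Sum.inl v : V ⊕ Bool)
      = Multiset.card (N.filter (fun e => v ∈ e)) := by
  show Multiset.card (Multiset.filter (fun x => (Sum.inl v : V ⊕ Bool) ∈ x)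
      (N.map (Sym2.map Sum.inl))) = _
  simp only [Multiset.filter_map]
  simp only [Multiset.card_map]
  congr 1
  apply Multiset.filter_congr
  intro e _
  simp [mem_emb_inl]

lemma val_eq_sdiff_add_inter (s t : Finset (Sym2 V)) :
    s.val = (s \ t).val + (s ∩ t).val := by
  have h := Finset.sdiff_union_inter s t
  rw [← Finset.disjUnion_eq_union _ _ (Finset.disjoint_sdiff_inter s t)] at h
  exact (congrArg Finset.val h).symm

lemma card_filter_mem_eq_two {e : Sym2 V} [Fintype V] (he : ¬ e.IsDiag) :
    (Finset.univ.filter (fun v => v ∈ e)).card = 2 := by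
  induction e with
  | _ a b =>
    rw [Sym2.isDiag_iff_proj_eq] at he
    have : Finset.univ.filter (fun v => v ∈ s(a, b)) = {a, b} := by
      ext x; simp [Sym2.mem_iff]
    rw [this, Finset.card_insert_of_notMem (by simpa using he), Finset.card_singleton]

lemma sum_card_filter [Fintype V] (N : Multiset (Sym2 (V ⊕ Bool)))
    (h : ∀ x ∈ N, ∃ e : Sym2 V, ¬ e.IsDiag ∧ Sym2.map Sum.inl e = x) :
    ∑ v : V, Multiset.card (N.filter (fun x => (Sum.inl v : V ⊕ Bool) ∈ x))
      = 2 * Multiset.card N := by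
  induction N using Multiset.induction with
  | empty => simp
  | cons x N ih =>
    obtain ⟨e, hd, rfl⟩ := h x (Multiset.mem_cons_self _ _)
    have hN := ih (fun y hy => h y (Multiset.mem_cons_of_mem hy))
    have hcnt : ∀ v : V, Multiset.card
        ((Sym2.map Sum.inl e ::ₘ N).filter (fun x => (Sum.inl v : V ⊕ Bool) ∈ x))
        = (if v ∈ e then 1 else 0)
          + Multiset.card (N.filter (fun x => (Sum.inl v : V ⊕ Bool) ∈ x)) := by
      intro v
      rw [Multiset.filter_cons]
      by_cases hv : v ∈ e
      · rw [if_pos (mem_emb_inl.2 hv)]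
        simp [hv]
        omega
      · rw [if_neg (fun hc => hv (mem_emb_inl.1 hc))]; simp [hv]
    simp only [hcnt, Finset.sum_add_distrib, hN, Finset.sum_ite_mem]
    rw [Finset.sum_boole]
    have : (Finset.univ.filter (fun v => v ∈ e)).card = 2 := card_filter_mem_eq_two hd
    simp only [Multiset.card_cons]
    push_cast
    omega

end S2A
theorem stmt2 {V : Type} [Fintype V] [DecidableEq V] (G : SimpleGraph V) [DecidableRel G.Adj]
    (hn : Even (Fintype.card V))
    (R : Finset (Sym2 V)) (hRE : R ⊆ G.edgeFinset) (hR : R.card = Fintype.card V / 2)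
    (ℓ : ℕ) (hℓ : ℓ ≤ Fintype.card V / 2) :
    (∃ M : Finset (Sym2 V), M ⊆ G.edgeFinset ∧
        (∀ v : V, (M.filter (fun e => v ∈ e)).card = 1) ∧
        (M ∩ R).card = ℓ)
    ↔ (∃ X' ≤ Xreg R, ∃ Y' ≤ Yunreg G R,
        Multiset.card X' = Fintype.card V / 2 - ℓ ∧
        Multiset.card Y' = Fintype.card V / 2 - ℓ ∧
        apWinner ((Xreg R - X') + Y') (Sum.inr false)) := by
  obtain ⟨m, hm⟩ := hn
  have hn2 : Fintype.card V / 2 = m := by omega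
  have hRm : R.card = m := by omega
  set emb : Sym2 V → Sym2 (V ⊕ Bool) := Sym2.map Sum.inl with hemb
  set pp : Sym2 (V ⊕ Bool) := s(Sum.inr false, Sum.inr true) with hpp
  have hppscore : ∀ c : V ⊕ Bool, apScore ({pp} : Multiset (Sym2 (V ⊕ Bool))) c ≤ 1 := by
    intro c
    calc apScore ({pp} : Multiset (Sym2 (V ⊕ Bool))) c
        ≤ Multiset.card ({pp} : Multiset (Sym2 (V ⊕ Bool))) :=
          Multiset.card_le_card (Multiset.filter_le _ _)
      _ = 1 := by simp
  have hppfalse : apScore ({pp} : Multiset (Sym2 (V ⊕ Bool))) (Sum.inr false) = 1 := by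
    simp [apScore, hpp, Multiset.filter_singleton, Sym2.mem_iff]
  have hppinl : ∀ v : V, apScore ({pp} : Multiset (Sym2 (V ⊕ Bool))) (Sum.inl v) = 0 := by
    intro v
    simp [apScore, hpp, Multiset.filter_singleton, Sym2.mem_iff]
  constructor
  · rintro ⟨M, hME, hPM, hMR⟩
    have hv1 : ∀ v : V, Multiset.card
        ((M.val.map emb).filter (fun x => (Sum.inl v : V ⊕ Bool) ∈ x)) = 1 := by
      intro v
      have h1 : apScore (M.val.map emb) (Sum.inl v : V ⊕ Bool)
          = Multiset.card (M.val.filter (fun e => v ∈ e)) := S2A.apScore_map_inl M.val v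
      have h2 : Multiset.card (M.val.filter (fun e => v ∈ e)) = 1 := by
        rw [← Finset.filter_val]; exact hPM v
      exact h1.trans h2
    have hMnd : ∀ x ∈ M.val.map emb, ∃ e : Sym2 V, ¬ e.IsDiag ∧ emb e = x := by
      intro x hx
      rw [Multiset.mem_map] at hx
      obtain ⟨e, he, rfl⟩ := hx
      exact ⟨e, G.not_isDiag_of_mem_edgeSet (SimpleGraph.mem_edgeFinset.1 (hME he)), rfl⟩
    have hsum := S2A.sum_card_filter (M.val.map emb) hMnd
    simp only [hv1, Finset.sum_const, Finset.card_univ, smul_eq_mul, mul_one,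
      Multiset.card_map] at hsum
    have hMcard : M.card = m := by
      have : Multiset.card M.val = M.card := rfl
      omega
    have h1 := Finset.card_sdiff_add_card_inter R M
    have h2 := Finset.card_sdiff_add_card_inter M R
    have hRM : (R ∩ M).card = ℓ := by rw [Finset.inter_comm]; exact hMR
    have hXle : (R \ M).val.map emb ≤ R.val.map emb :=
      Multiset.map_le_map (Finset.val_le_iff.2 (Finset.sdiff_subset))
    refine ⟨(R \ M).val.map emb, ?_, (M \ R).val.map emb, ?_, ?_, ?_, ?_⟩
    · exact le_trans hXle (Multiset.le_add_right _ _)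
    · exact Multiset.map_le_map (Finset.val_le_iff.2
        (Finset.sdiff_subset_sdiff hME (Finset.Subset.refl R)))
    · simp only [Multiset.card_map]
      have : Multiset.card (R \ M).val = (R \ M).card := rfl
      omega
    · simp only [Multiset.card_map]
      have : Multiset.card (M \ R).val = (M \ R).card := rfl
      omega
    · have hW : Xreg R - (R \ M).val.map emb + (M \ R).val.map emb
          = M.val.map emb + {pp} := by
        show R.val.map emb + {pp} - (R \ M).val.map emb + (M \ R).val.map emb = _
        rw [← tsub_add_eq_add_tsub hXle]
        rw [S2A.val_eq_sdiff_add_inter R M, Multiset.map_add, add_tsub_cancel_left]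
        rw [S2A.val_eq_sdiff_add_inter M R, Multiset.map_add, Finset.inter_comm R M]
        abel
      rw [hW]
      intro d
      have hsp : apScore (M.val.map emb + {pp}) (Sum.inr false) = 1 := by
        rw [S2A.apScore_add, S2A.apScore_map_inr, hppfalse]
      rw [hsp]
      cases d with
      | inl v =>
        rw [S2A.apScore_add, S2A.apScore_map_inl, hppinl]
        have : Multiset.card (M.val.filter (fun e => v ∈ e)) = 1 := by
          rw [← Finset.filter_val]; exact hPM v
        omega
      | inr b =>
        rw [S2A.apScore_add, S2A.apScore_map_inr]
        simpa using hppscore (Sum.inr b)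
  · rintro ⟨X', hX', Y', hY', hXc, hYc, hwin⟩
    have hYmem : ∀ x ∈ Y', ∃ e ∈ G.edgeFinset \ R, emb e = x := by
      intro x hx
      have h := Multiset.mem_of_le hY' hx
      rw [Yunreg, Multiset.mem_map] at h
      obtain ⟨e, he, rfl⟩ := h
      exact ⟨e, he, rfl⟩
    have hYinr : ∀ b : Bool, apScore Y' (Sum.inr b) = 0 := by
      intro b
      have hle : apScore Y' (Sum.inr b) ≤ apScore (Yunreg G R) (Sum.inr b) :=
        Multiset.card_le_card (Multiset.filter_le_filter _ hY')
      have h0 : apScore (Yunreg G R) (Sum.inr b) = 0 := S2A.apScore_map_inr _ b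
      omega
    have hcardXreg : Multiset.card (Xreg R) = m + 1 := by
      rw [Xreg]
      simp only [Multiset.card_add, Multiset.card_map, Multiset.card_singleton]
      have : Multiset.card R.val = R.card := rfl
      omega
    -- pp is not in X'
    have hppX : pp ∉ X' := by
      intro hppX
      have hc1 : (Xreg R).count pp = 1 := by
        rw [Xreg, Multiset.count_add]
        have h0 : (R.val.map emb).count pp = 0 := by
          rw [Multiset.count_eq_zero]
          intro hc
          rw [Multiset.mem_map] at hc
          obtain ⟨e, _, he⟩ := hc
          exact S2A.notMem_emb_inr (b := false) (e := e)
            (by rw [← hemb, he, hpp]; exact Sym2.mem_mk_left _ _)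
        rw [h0, Multiset.count_singleton_self]
      have hc2 : 1 ≤ X'.count pp := Multiset.one_le_count_iff_mem.2 hppX
      have hc3 : (Xreg R - X').count pp = 0 := by
        rw [Multiset.count_sub]
        have := Multiset.count_le_of_le pp hX'
        omega
      have hscore0 : apScore (Xreg R - X' + Y') (Sum.inr false) = 0 := by
        rw [S2A.apScore_add, hYinr false]
        have : (Xreg R - X').filter
            (fun x => (Sum.inr false : V ⊕ Bool) ∈ x) = 0 := by
          rw [Multiset.filter_eq_nil]
          intro x hx hmem
          have hxX : x ∈ Xreg R := Multiset.mem_of_le (tsub_le_self) hx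
          rw [Xreg, Multiset.mem_add] at hxX
          rcases hxX with h | h
          · rw [Multiset.mem_map] at h
            obtain ⟨e, _, rfl⟩ := h
            exact S2A.notMem_emb_inr hmem
          · rw [Multiset.mem_singleton, ← hpp] at h
            subst h
            rw [← Multiset.count_pos] at hx
            omega
        rw [apScore, this]
        rfl
      have hWpos : 0 < Multiset.card (Xreg R - X' + Y') := by
        rw [Multiset.card_add, Multiset.card_sub hX']
        have := Multiset.card_le_card hX'
        omega
      obtain ⟨x, hx⟩ := Multiset.card_pos_iff_exists_mem.1 hWpos
      have hax : ∃ a, a ∈ x := ⟨x.out.1, Sym2.out_fst_mem x⟩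
      obtain ⟨a, ha⟩ := hax
      have h1le : 1 ≤ apScore (Xreg R - X' + Y') a := by
        rw [apScore]
        have : x ∈ (Xreg R - X' + Y').filter (fun w => a ∈ w) :=
          Multiset.mem_filter.2 ⟨hx, ha⟩
        have := Multiset.card_pos_iff_exists_mem.2 ⟨x, this⟩
        omega
      have := hwin a
      omega
    have hX'le : X' ≤ R.val.map emb := by
      rw [Multiset.le_iff_count]
      intro x
      have hc := Multiset.count_le_of_le x hX'
      rw [Xreg, Multiset.count_add] at hc
      rw [show (Sym2.map Sum.inl : Sym2 V → Sym2 (V ⊕ Bool)) = emb from hemb.symm] at hc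
      rw [show s(Sum.inr false, Sum.inr true) = pp from hpp.symm] at hc
      by_cases hxp : x = pp
      · subst hxp
        have : X'.count pp = 0 := Multiset.count_eq_zero.2 hppX
        omega
      · rw [Multiset.count_singleton, if_neg hxp] at hc
        omega
    set Mv : Multiset (Sym2 (V ⊕ Bool)) := R.val.map emb - X' + Y' with hMv
    have hW : Xreg R - X' + Y' = Mv + {pp} := by
      rw [Xreg]
      rw [show (Sym2.map Sum.inl : Sym2 V → Sym2 (V ⊕ Bool)) = emb from hemb.symm]
      rw [show s(Sum.inr false, Sum.inr true) = pp from hpp.symm]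
      rw [← tsub_add_eq_add_tsub hX'le, hMv]
      exact add_right_comm _ _ _
    have hMmem : ∀ x ∈ Mv, ∃ e ∈ G.edgeFinset, emb e = x := by
      intro x hx
      rw [hMv, Multiset.mem_add] at hx
      rcases hx with h | h
      · have : x ∈ R.val.map emb := Multiset.mem_of_le tsub_le_self h
        rw [Multiset.mem_map] at this
        obtain ⟨e, he, rfl⟩ := this
        exact ⟨e, hRE he, rfl⟩
      · obtain ⟨e, he, rfl⟩ := hYmem x h
        exact ⟨e, (Finset.mem_sdiff.1 he).1, rfl⟩
    have hMnd : ∀ x ∈ Mv, ∃ e : Sym2 V, ¬ e.IsDiag ∧ emb e = x := by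
      intro x hx
      obtain ⟨e, he, rfl⟩ := hMmem x hx
      exact ⟨e, G.not_isDiag_of_mem_edgeSet (SimpleGraph.mem_edgeFinset.1 he), rfl⟩
    have hMcard : Multiset.card Mv = m := by
      rw [hMv, Multiset.card_add, Multiset.card_sub hX'le]
      have h1 : Multiset.card (R.val.map emb) = m := by
        rw [Multiset.card_map]
        exact hRm
      omega
    have hMinr : ∀ b : Bool, apScore Mv (Sum.inr b) = 0 := by
      intro b
      rw [apScore]
      have : Mv.filter (fun x => (Sum.inr b : V ⊕ Bool) ∈ x) = 0 := by
        rw [Multiset.filter_eq_nil]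
        intro x hx hmem
        obtain ⟨e, _, rfl⟩ := hMmem x hx
        exact S2A.notMem_emb_inr hmem
      rw [this]; rfl
    have hsp : apScore (Mv + {pp}) (Sum.inr false) = 1 := by
      rw [S2A.apScore_add, hMinr false, hppfalse]
    have hub : ∀ v : V, apScore Mv (Sum.inl v) ≤ 1 := by
      intro v
      have := hwin (Sum.inl v)
      rw [hW, hsp, S2A.apScore_add, hppinl v] at this
      omega
    have hsum := S2A.sum_card_filter Mv hMnd
    have heach : ∀ v : V, apScore Mv (Sum.inl v) = 1 := by
      have hiff := Finset.sum_eq_sum_iff_of_le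
        (f := fun v : V => apScore Mv (Sum.inl v)) (g := fun _ : V => 1)
        (s := Finset.univ) (fun v _ => hub v)
      have hs : ∑ v : V, apScore Mv (Sum.inl v) = ∑ _v : V, 1 := by
        have : ∑ v : V, apScore Mv (Sum.inl v)
            = ∑ v : V, Multiset.card (Mv.filter (fun x => (Sum.inl v : V ⊕ Bool) ∈ x)) := rfl
        rw [this, hsum, hMcard]
        simp
        omega
      intro v
      exact (hiff.1 hs) v (Finset.mem_univ v)
    have hndMv : Mv.Nodup := by
      rw [Multiset.nodup_iff_count_le_one]
      intro x
      by_cases hx : x ∈ Mv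
      · obtain ⟨e, hde, rfl⟩ := hMnd x hx
        have hmem : (Sum.inl e.out.1 : V ⊕ Bool) ∈ emb e :=
          S2A.mem_emb_inl.2 (Sym2.out_fst_mem e)
        have h1 : Mv.count (emb e)
            = (Mv.filter (fun x => (Sum.inl e.out.1 : V ⊕ Bool) ∈ x)).count (emb e) := by
          rw [Multiset.count_filter_of_pos (p := fun x => (Sum.inl e.out.1 : V ⊕ Bool) ∈ x) hmem]
        have h2 := Multiset.count_le_card (emb e)
          (Mv.filter (fun x => (Sum.inl e.out.1 : V ⊕ Bool) ∈ x))
        have h3 : Multiset.card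
            (Mv.filter (fun x => (Sum.inl e.out.1 : V ⊕ Bool) ∈ x)) = 1 := heach e.out.1
        omega
      · rw [Multiset.count_eq_zero.2 hx]
        omega
    set M : Finset (Sym2 V) := G.edgeFinset.filter (fun e => emb e ∈ Mv) with hMdef
    have hMvM : M.val.map emb = Mv := by
      rw [Multiset.Nodup.ext (Multiset.Nodup.map (S2A.emb_inj) M.nodup) hndMv]
      intro x
      constructor
      · intro hx
        rw [Multiset.mem_map] at hx
        obtain ⟨e, he, rfl⟩ := hx
        have hee : e ∈ M := he
        rw [hMdef, Finset.mem_filter] at hee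
        exact hee.2
      · intro hx
        obtain ⟨e, he, rfl⟩ := hMmem x hx
        rw [Multiset.mem_map]
        exact ⟨e, Finset.mem_filter.2 ⟨he, hx⟩, rfl⟩
    refine ⟨M, Finset.filter_subset _ _, ?_, ?_⟩
    · -- perfect matching condition
      intro v
      have h0 := heach v
      have h1 : apScore Mv (Sum.inl v : V ⊕ Bool)
          = Multiset.card (M.val.filter (fun e => v ∈ e)) := by
        rw [← hMvM]; exact S2A.apScore_map_inl M.val v
      rw [← Finset.filter_val] at h1
      have h2 : Multiset.card (M.filter (fun e => v ∈ e)).val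
          = (M.filter (fun e => v ∈ e)).card := rfl
      omega
    · -- red count
      have hA : Mv.filter (fun x => x ∈ R.val.map emb) = R.val.map emb - X' := by
        rw [hMv, Multiset.filter_add]
        have h1 : (R.val.map emb - X').filter (fun x => x ∈ R.val.map emb)
            = R.val.map emb - X' :=
          Multiset.filter_eq_self.2 (fun x hx => Multiset.mem_of_le tsub_le_self hx)
        have h2 : Y'.filter (fun x => x ∈ R.val.map emb) = 0 := by
          rw [Multiset.filter_eq_nil]
          intro x hx hmem
          obtain ⟨e, he, rfl⟩ := hYmem x hx
          rw [Multiset.mem_map] at hmem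
          obtain ⟨e', he', hee⟩ := hmem
          have : e' = e := S2A.emb_inj hee
          subst this
          exact (Finset.mem_sdiff.1 he).2 he'
        rw [h1, h2, add_zero]
      have hAcard : Multiset.card (Mv.filter (fun x => x ∈ R.val.map emb)) = ℓ := by
        rw [hA, Multiset.card_sub hX'le, Multiset.card_map]
        have : Multiset.card R.val = R.card := rfl
        omega
      have hMR2 : (M ∩ R) = M.filter (fun e => e ∈ R) := by
        ext x
        simp only [Finset.mem_inter, Finset.mem_filter]
      have hfm : Multiset.card (Mv.filter (fun x => x ∈ R.val.map emb))
          = Multiset.card (M.val.filter (fun e => e ∈ R)) := by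
        rw [← hMvM, Multiset.filter_map, Multiset.card_map]
        congr 1
        apply Multiset.filter_congr
        intro e _
        simp only [Function.comp]
        constructor
        · intro h
          rw [Multiset.mem_map] at h
          obtain ⟨e', he', hee⟩ := h
          have : e' = e := S2A.emb_inj hee
          subst this
          exact he'
        · intro h
          exact Multiset.mem_map.2 ⟨e, h, rfl⟩
      rw [hMR2]
      have h3 : (M.filter (fun e => e ∈ R)).card
          = Multiset.card (M.val.filter (fun e => e ∈ R)) := by
        rw [← Finset.filter_val]; rfl
      omega
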